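/- Let P ⊂ ℝⁿ be a compact convex polytope with nonempty interior containing the origin in its interior, with rational vertices, and let θ be its extremal affine function. If there exists δ > 0 such that I_θ(f) ≥ δ ∫_P f(x) dx for every normalized rational piecewise affine convex function f on P, then max_{x∈P} θ(x) < 1. -/

import Mathlib

set_option maxHeartbeats 1000000

open MeasureTheory

/-- `P ⊆ ℝⁿ` is a (compact convex) polytope: the convex hull of finitely many points. -/
def IsPolytope {n : ℕ} (P : Set (Fin n → ℝ)) : Prop :=
  ∃ V : Finset (Fin n → ℝ), P = convexHull ℝ (V : Set (Fin n → ℝ))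

/-- `θ : ℝⁿ → ℝ` is an affine function. -/
def IsAffineFn {n : ℕ} (θ : (Fin n → ℝ) → ℝ) : Prop :=
  ∃ (a : Fin n → ℝ) (c : ℝ), ∀ x, θ x = (∑ i, a i * x i) + c

/-- `θ` is the extremal affine function of `P`: it is affine, `∫_P θ = 0`, and
`∫_P xᵢ θ = ∫_P xᵢ` for every `i`. -/
def IsExtremalAffine {n : ℕ} (P : Set (Fin n → ℝ)) (θ : (Fin n → ℝ) → ℝ) : Prop :=
  IsAffineFn θ ∧ (∫ x in P, θ x) = 0 ∧
    ∀ i : Fin n, (∫ x in P, x i * θ x) = ∫ x in P, x i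

/-- The relative Ding invariant `I_θ(f) = -f(0) + (1/vol P) ∫_P f (1 - θ)`. -/
noncomputable def DingI {n : ℕ} (P : Set (Fin n → ℝ)) (θ f : (Fin n → ℝ) → ℝ) : ℝ :=
  -f 0 + (1 / (volume P).toReal) * ∫ x in P, f x * (1 - θ x)

/-- `f` is a rational piecewise affine convex function: a finite maximum of affine functions
with rational coefficients. -/
def IsRatPLConvex {n : ℕ} (f : (Fin n → ℝ) → ℝ) : Prop :=
  ∃ (m : ℕ) (a : Fin (m + 1) → Fin n → ℚ) (c : Fin (m + 1) → ℚ),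
    ∀ x, f x = Finset.univ.sup' Finset.univ_nonempty
      (fun k : Fin (m + 1) => (∑ i, (a k i : ℝ) * x i) + (c k : ℝ))

/-- `f` is normalized on `P`: `min_P f = f 0 = 0`. -/
def IsNormalized {n : ℕ} (P : Set (Fin n → ℝ)) (f : (Fin n → ℝ) → ℝ) : Prop :=
  f 0 = 0 ∧ ∀ x ∈ P, 0 ≤ f x

lemma sup2 (g : Fin 2 → ℝ) : Finset.univ.sup' Finset.univ_nonempty g = max (g 0) (g 1) := by
  apply le_antisymm
  · apply Finset.sup'_le
    intro k _
    fin_cases k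
    · exact le_max_left _ _
    · exact le_max_right _ _
  · exact max_le (Finset.le_sup' _ (Finset.mem_univ _)) (Finset.le_sup' _ (Finset.mem_univ _))

/-- If there is `δ > 0` with `I_θ(f) ≥ δ ∫_P f` for every normalized rational piecewise
affine convex `f` on `P` (a rational polytope with the origin in its interior), then
`max_P θ < 1`. -/
theorem uniform_stability_implies_max_lt_one {n : ℕ} (P : Set (Fin n → ℝ))
    (hP : ∃ V : Finset (Fin n → ℚ),
      P = convexHull ℝ ((fun v : Fin n → ℚ => fun i => (v i : ℝ)) '' ↑V))
    (hint : (0 : Fin n → ℝ) ∈ interior P)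
    (θ : (Fin n → ℝ) → ℝ) (hθ : IsExtremalAffine P θ)
    (hδ : ∃ δ > (0 : ℝ), ∀ f : (Fin n → ℝ) → ℝ, IsRatPLConvex f → IsNormalized P f →
      δ * (∫ x in P, f x) ≤ DingI P θ f) :
    ∃ M : ℝ, IsGreatest (θ '' P) M ∧ M < 1 := by
  obtain ⟨V, hPV⟩ := hP
  obtain ⟨⟨a, c, hac⟩, hI0, -⟩ := hθ
  obtain ⟨δ, hδ0, hstab⟩ := hδ
  -- basic properties of P
  have hPc : IsCompact P := by
    rw [hPV]
    exact Set.Finite.isCompact_convexHull (𝕜 := ℝ) ((V.finite_toSet).image _)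
  have hPcvx : Convex ℝ P := hPV ▸ convex_convexHull ℝ _
  have h0P : (0 : Fin n → ℝ) ∈ P := interior_subset hint
  have hPmeas : MeasurableSet P := hPc.isClosed.measurableSet
  -- continuity of θ
  have hθc : Continuous θ := by
    have : θ = fun x => (∑ i, a i * x i) + c := funext hac
    rw [this]
    exact (continuous_finset_sum _ fun i _ =>
      continuous_const.mul (continuous_apply i)).add continuous_const
  -- the maximum
  obtain ⟨x₀, hx₀P, hmax⟩ := hPc.exists_isMaxOn ⟨0, h0P⟩ hθc.continuousOn
  refine ⟨θ x₀, ⟨⟨x₀, hx₀P, rfl⟩, ?_⟩, ?_⟩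
  · rintro - ⟨x, hx, rfl⟩
    exact hmax hx
  by_contra hM
  push_neg at hM  -- hM : 1 ≤ θ x₀
  -- positive finite volume
  have hνpos : 0 < (volume P).toReal := by
    refine ENNReal.toReal_pos (ne_of_gt ?_) hPc.measure_lt_top.ne
    exact lt_of_lt_of_le (isOpen_interior.measure_pos volume ⟨0, hint⟩)
      (measure_mono interior_subset)
  set ν : ℝ := (volume P).toReal with hν
  -- θ 0 = c
  have hθ0 : θ 0 = c := by simp [hac]
  by_cases hc : θ 0 < θ x₀
  case neg =>
    -- θ is constant, hence ≡ 0, contradiction with 1 ≤ θ x₀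
    have hmax0 : ∀ x ∈ P, θ x ≤ θ 0 := by
      intro x hx
      exact (hmax hx).trans (le_of_not_gt hc)
    have ha0 : ∀ i, a i = 0 := by
      obtain ⟨r, hr0, hball⟩ := Metric.isOpen_iff.mp isOpen_interior 0 hint
      intro i
      have hmem : ∀ s : ℝ, |s| ≤ r/2 → (fun j => if j = i then s else 0) ∈ P := by
        intro s hs
        refine interior_subset (hball ?_)
        rw [Metric.mem_ball, dist_zero_right]
        have h1 : ‖(fun j => if j = i then s else 0 : Fin n → ℝ)‖ ≤ r/2 := by
          refine (pi_norm_le_iff_of_nonneg (by positivity)).2 (fun j => ?_)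
          by_cases h : j = i <;> simp [h, hs]
          positivity
        linarith
      have hval : ∀ s : ℝ, |s| ≤ r/2 → a i * s ≤ 0 := by
        intro s hs
        have hle := hmax0 _ (hmem s hs)
        rw [hac, hθ0] at hle
        have hsum : ∑ j, a j * (if j = i then s else 0) = a i * s := by
          rw [Finset.sum_eq_single i] <;> intros <;> simp_all
        rw [hsum] at hle; linarith
      have h1 := hval (r/2) (by rw [abs_of_nonneg (by linarith)])
      have h2 := hval (-(r/2)) (by rw [abs_neg, abs_of_nonneg (by linarith)])
      rcases lt_trichotomy (a i) 0 with h | h | h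
      · nlinarith
      · exact h
      · nlinarith
    have hconst : ∀ x, θ x = c := by
      intro x; rw [hac]; simp [ha0]
    have : c = 0 := by
      have := hI0
      rw [show (∫ x in P, θ x) = (∫ _ in P, c) from by
        simp_rw [hconst]] at this
      rw [setIntegral_const] at this
      simp only [smul_eq_mul] at this
      rcases mul_eq_zero.1 this with h | h
      · exact absurd h (ne_of_gt hνpos)
      · exact h
    rw [hconst x₀, this] at hM; linarith
  case pos =>
    -- main case: θ 0 < θ x₀
    set S : ℝ := ∑ i, a i * x₀ i with hS
    have hθx₀ : θ x₀ = S + c := hac x₀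
    set D : ℝ := θ x₀ - θ 0 with hD
    have hD0 : 0 < D := by rw [hD]; linarith
    have hDS : D = S := by rw [hD, hθx₀, hθ0]; ring
    set ε : ℝ := min (δ * ν) D / 4 with hε
    have hε0 : 0 < ε := by
      have h1 : 0 < δ * ν := mul_pos hδ0 hνpos
      exact div_pos (lt_min h1 hD0) (by norm_num)
    have hε1 : 4 * ε ≤ δ * ν := by
      have := min_le_left (δ * ν) D
      rw [hε]; linarith
    have hε2 : 4 * ε ≤ D := by
      have := min_le_right (δ * ν) D
      rw [hε]; linarith
    -- the interior point y
    set t : ℝ := ε / (2 * D) with ht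
    have ht0 : 0 < t := div_pos hε0 (by linarith)
    have ht1 : t ≤ 1 := by
      rw [ht, div_le_one (by linarith)]; linarith
    set y : Fin n → ℝ := (1 - t) • x₀ with hy
    have hyint : y ∈ interior P := by
      have h1 := hPcvx.combo_interior_closure_mem_interior hint
        (subset_closure hx₀P) ht0 (by linarith : (0:ℝ) ≤ 1 - t) (by ring)
      simpa [hy] using h1
    have hyP : y ∈ P := interior_subset hyint
    have hθy : θ y = θ x₀ - ε / 2 := by
      rw [hac, hθx₀]
      have h1 : ∑ i, a i * y i = (1 - t) * S := by
        rw [hS, Finset.mul_sum]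
        exact Finset.sum_congr rfl (fun i _ => by
          show a i * ((1 - t) * x₀ i) = (1 - t) * (a i * x₀ i); ring)
      rw [h1]
      have h2 : t * S = ε / 2 := by
        rw [ht, ← hDS]
        field_simp
      nlinarith [h2]
    -- bounding radius R
    obtain ⟨R₀, hR₀⟩ := hPc.isBounded.subset_closedBall 0
    set R : ℝ := max R₀ 0 with hR
    have hR0 : (0:ℝ) ≤ R := le_max_right _ _
    have hRP : ∀ x ∈ P, ∀ i, |x i| ≤ R := by
      intro x hx i
      have h1 : ‖x‖ ≤ R := by
        have h2 := hR₀ hx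
        rw [Metric.mem_closedBall, dist_zero_right] at h2
        exact h2.trans (le_max_left _ _)
      exact (norm_le_pi_norm x i).trans h1
    -- rational approximations
    set ηa : ℝ := ε / (8 * (n+1) * (R+1)) with hηa
    have hηa0 : 0 < ηa := by rw [hηa]; positivity
    choose qa hqa using fun i : Fin n => exists_rat_near (a i) hηa0
    obtain ⟨qc, hqc⟩ := exists_rat_near (ε - S) (show (0:ℝ) < ε/8 by linarith)
    set ℓ : (Fin n → ℝ) → ℝ := fun x => (∑ i, (qa i : ℝ) * x i) + (qc : ℝ) with hℓ
    have hℓc : Continuous ℓ := by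
      rw [hℓ]
      exact (continuous_finset_sum _ fun i _ =>
        continuous_const.mul (continuous_apply i)).add continuous_const
    clear_value ν S D ε t y R ηa ℓ
    -- error bound
    have herr : ∀ x ∈ P, |ℓ x - (θ x - θ x₀ + ε)| ≤ ε/4 := by
      intro x hx
      have hsplit : ∑ i, ((qa i:ℝ) - a i) * x i
          = (∑ i, (qa i:ℝ) * x i) - ∑ i, a i * x i := by
        rw [← Finset.sum_sub_distrib]
        exact Finset.sum_congr rfl (fun i _ => by ring)
      have h1 : ℓ x - (θ x - θ x₀ + ε)
          = (∑ i, ((qa i : ℝ) - a i) * x i) + ((qc:ℝ) - (ε - S)) := by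
        rw [hℓ, hac x, hθx₀, hsplit]; ring
      rw [h1]
      have h2 : |∑ i, ((qa i:ℝ) - a i) * x i| ≤ (n:ℝ) * (ηa * R) := by
        calc |∑ i, ((qa i:ℝ) - a i) * x i| ≤ ∑ i, |((qa i:ℝ) - a i) * x i| :=
              Finset.abs_sum_le_sum_abs _ _
          _ ≤ ∑ _i : Fin n, ηa * R := by
              refine Finset.sum_le_sum (fun i _ => ?_)
              rw [abs_mul]
              refine mul_le_mul ?_ (hRP x hx i) (abs_nonneg _) hηa0.le
              rw [abs_sub_comm]
              exact (hqa i).le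
          _ = (n:ℝ) * (ηa * R) := by
              rw [Finset.sum_const, Finset.card_univ, Fintype.card_fin, nsmul_eq_mul]
      have h4 : (n:ℝ) * (ηa * R) ≤ ε/8 := by
        have h5 : (n:ℝ) * R ≤ ((n:ℝ)+1) * (R+1) := by
          have : (0:ℝ) ≤ (n:ℝ) := Nat.cast_nonneg n
          nlinarith
        have h6 : (0:ℝ) < ((n:ℝ)+1) * (R+1) := by positivity
        calc (n:ℝ) * (ηa * R) = ε * (((n:ℝ) * R) / (8 * (((n:ℝ)+1) * (R+1)))) := by
              rw [hηa]; ring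
          _ ≤ ε * ((((n:ℝ)+1) * (R+1)) / (8 * (((n:ℝ)+1) * (R+1)))) := by
              have h7 : (0:ℝ) < 8 * (((n:ℝ)+1) * (R+1)) := by positivity
              exact mul_le_mul_of_nonneg_left
                (div_le_div_of_nonneg_right h5 h7.le) hε0.le
          _ = ε / 8 := by
              rw [mul_comm (8:ℝ), ← div_div, div_self h6.ne']
              ring
      have h3 : |(qc:ℝ) - (ε - S)| ≤ ε/8 := by
        rw [abs_sub_comm]; exact hqc.le
      calc |(∑ i, ((qa i:ℝ) - a i) * x i) + ((qc:ℝ) - (ε - S))|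
          ≤ |∑ i, ((qa i:ℝ) - a i) * x i| + |(qc:ℝ) - (ε - S)| := abs_add_le _ _
        _ ≤ ε/8 + ε/8 := add_le_add (h2.trans h4) h3
        _ ≤ ε/4 := by linarith
    -- consequences of the error bound
    have hℓ0 : ℓ 0 ≤ 0 := by
      have h1 := (abs_le.1 (herr 0 h0P)).2
      have h2 : θ 0 - θ x₀ = -D := by rw [hD]; ring
      linarith
    have hℓy : ε/4 ≤ ℓ y := by
      have h1 := (abs_le.1 (herr y hyP)).1
      rw [hθy] at h1
      linarith
    have hkey : ∀ x ∈ P, 0 < ℓ x → 1 - θ x ≤ δ * ν / 2 := by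
      intro x hx hℓx
      have h1 := (abs_le.1 (herr x hx)).2
      linarith
    -- a small ball where ℓ is bounded below
    have hyU : y ∈ interior P ∩ ℓ ⁻¹' Set.Ioi (ε/8) :=
      ⟨hyint, by simp only [Set.mem_preimage, Set.mem_Ioi]; linarith⟩
    obtain ⟨r₂, hr₂0, hball₂⟩ := Metric.isOpen_iff.mp
      (isOpen_interior.inter (isOpen_Ioi.preimage hℓc)) y hyU
    set B := Metric.ball y r₂ with hB
    have hBP : B ⊆ P := fun z hz => interior_subset (hball₂ hz).1
    have hBℓ : ∀ z ∈ B, ε/8 < ℓ z := fun z hz => (hball₂ hz).2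
    -- the test function f
    set f : (Fin n → ℝ) → ℝ := fun x => max (ℓ x) 0 with hf
    have hfc : Continuous f := hℓc.max continuous_const
    have hfRat : IsRatPLConvex f := by
      refine ⟨1, ![qa, 0], ![qc, 0], fun x => ?_⟩
      rw [sup2]
      simp [hf, hℓ]
    have hfNorm : IsNormalized P f := ⟨max_eq_right hℓ0, fun x _ => le_max_right _ _⟩
    have hfi : IntegrableOn f P := ContinuousOn.integrableOn_compact hPc hfc.continuousOn
    have hgi : IntegrableOn (fun x => f x * (1 - θ x)) P :=
      ContinuousOn.integrableOn_compact hPc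
        (hfc.mul (continuous_const.sub hθc)).continuousOn
    -- positivity of ∫_P f
    have hI₁B : (ε/8) * (volume B).toReal ≤ ∫ x in B, f x := by
      have hBi : IntegrableOn f B := hfi.mono_set hBP
      have h1 : (∫ _x in B, ε/8) ≤ ∫ x in B, f x :=
        setIntegral_mono_on (integrableOn_const measure_ball_lt_top.ne) hBi
          measurableSet_ball
          (fun z hz => le_trans (hBℓ z hz).le (le_max_left _ _))
      rw [setIntegral_const, smul_eq_mul, mul_comm] at h1
      exact h1
    have hI₁pos : 0 < ∫ x in P, f x := by
      have hBpos : 0 < (volume B).toReal :=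
        ENNReal.toReal_pos (Metric.measure_ball_pos volume y hr₂0).ne' measure_ball_lt_top.ne
      have h1 : (∫ x in B, f x) ≤ ∫ x in P, f x :=
        setIntegral_mono_set hfi
          (Filter.Eventually.of_forall (fun z => le_max_right _ _))
          (HasSubset.Subset.eventuallyLE hBP)
      nlinarith
    set I₁ : ℝ := ∫ x in P, f x with hI₁
    -- bound on the Ding invariant
    have hI₂ : (∫ x in P, f x * (1 - θ x)) ≤ I₁ * (δ * ν / 2) := by
      have h1 : ∀ x ∈ P, f x * (1 - θ x) ≤ f x * (δ * ν / 2) := by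
        intro x hx
        rcases le_or_gt (ℓ x) 0 with h | h
        · have h2 : f x = 0 := max_eq_right h
          simp [h2]
        · exact mul_le_mul_of_nonneg_left (hkey x hx h) (le_max_right _ _)
      calc (∫ x in P, f x * (1 - θ x)) ≤ ∫ x in P, f x * (δ * ν / 2) :=
            setIntegral_mono_on hgi (hfi.mul_const _) hPmeas h1
        _ = I₁ * (δ * ν / 2) := integral_mul_const _ _
    have hDing : DingI P θ f ≤ (δ/2) * I₁ := by
      have h0 : f 0 = 0 := hfNorm.1
      have h1 : (1/ν) * (∫ x in P, f x * (1 - θ x)) ≤ (1/ν) * (I₁ * (δ * ν / 2)) :=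
        mul_le_mul_of_nonneg_left hI₂ (by positivity)
      have heq : (1/ν) * (I₁ * (δ * ν / 2)) = (δ/2) * I₁ := by
        field_simp
      rw [DingI, h0]
      rw [← hν]
      linarith
    have hfinal := hstab f hfRat hfNorm
    rw [← hI₁] at hfinal
    nlinarith
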